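/- Let P be a dynamic program all of whose update formulas are quantifier-free first-order formulas over a relational signature. Let S and T be states (structures) over the same signature with domains D_S, D_T, let A ⊆ D_S and B ⊆ D_T contain all constants, and suppose the induced substructures S|A and T|B are isomorphic via a bijection π. Then after applying any two π-respecting sequences of modifications (tuple insertions/deletions restricted to A and B), the resulting induced substructures on A and B are again isomorphic via π. -/

import Mathlib

/-- Quantifier-free formulas over a relational signature (`R` with arities `ar`),
with `k` free variables and `p` constant symbols. -/
inductive QF (R : Type) (ar : R → ℕ) (k p : ℕ) : Type where
  | rel (r : R) (ι : Fin (ar r) → Fin k ⊕ Fin p)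
  | eq (i j : Fin k ⊕ Fin p)
  | not (φ : QF R ar k p)
  | and (φ ψ : QF R ar k p)
  | or (φ ψ : QF R ar k p)

/-- Evaluation of a quantifier-free formula. -/
def QF.eval {R : Type} {ar : R → ℕ} {k p : ℕ} {X : Type}
    (interp : ∀ r, (Fin (ar r) → X) → Prop) (c : Fin p → X)
    (a : Fin k → X) : QF R ar k p → Prop
  | .rel r ι => interp r (fun i => Sum.elim a c (ι i))
  | .eq i j => Sum.elim a c i = Sum.elim a c j
  | .not φ => ¬ φ.eval interp c a
  | .and φ ψ => φ.eval interp c a ∧ ψ.eval interp c a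
  | .or φ ψ => φ.eval interp c a ∨ ψ.eval interp c a

/-- A quantifier-free dynamic (update) program: for every kind of modification
(insertion `true` / deletion `false`) of an input relation `s` and every auxiliary
relation `r`, a quantifier-free update formula whose free variables are the modified
tuple followed by the updated tuple. -/
structure DynProg (Rin Raux : Type) (arin : Rin → ℕ) (araux : Raux → ℕ) (p : ℕ) where
  upd : Bool → (s : Rin) → (r : Raux) →
    QF (Rin ⊕ Raux) (Sum.elim arin araux) (arin s + araux r) p

/-- A state of a dynamic program: an input database and an auxiliary database
over a common domain `X`. -/
structure DState (X : Type) (Rin Raux : Type) (arin : Rin → ℕ) (araux : Raux → ℕ) where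
  inp : ∀ s, (Fin (arin s) → X) → Prop
  aux : ∀ r, (Fin (araux r) → X) → Prop

/-- The combined interpretation of input and auxiliary relation symbols. -/
def DState.interp {X Rin Raux : Type} {arin : Rin → ℕ} {araux : Raux → ℕ}
    (st : DState X Rin Raux arin araux) :
    ∀ rr : Rin ⊕ Raux, (Fin (Sum.elim arin araux rr) → X) → Prop
  | .inl s => st.inp s
  | .inr r => st.aux r

/-- A concrete modification: insertion (`ins = true`) or deletion of a tuple `tup`
in the input relation `sym`. -/
structure DynMod (X : Type) (Rin : Type) (arin : Rin → ℕ) where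
  ins : Bool
  sym : Rin
  tup : Fin (arin sym) → X

/-- The image of a modification under a map `π`. Two modification sequences
respect `π` precisely if one is the image of the other under this map. -/
def DynMod.map {X Y Rin : Type} {arin : Rin → ℕ} (π : X → Y) (μ : DynMod X Rin arin) :
    DynMod Y Rin arin :=
  ⟨μ.ins, μ.sym, π ∘ μ.tup⟩

/-- Applying one modification to a state: the input relation is changed
accordingly, and every auxiliary relation is recomputed by its quantifier-free
update formula, evaluated in the old state with the modified tuple as parameters. -/
def applyMod {X Rin Raux : Type} {arin : Rin → ℕ} {araux : Raux → ℕ} {p : ℕ}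
    (P : DynProg Rin Raux arin araux p) (c : Fin p → X)
    (st : DState X Rin Raux arin araux) (μ : DynMod X Rin arin) :
    DState X Rin Raux arin araux where
  inp s v := if μ.ins then st.inp s v ∨ (s = μ.sym ∧ HEq v μ.tup)
             else st.inp s v ∧ ¬(s = μ.sym ∧ HEq v μ.tup)
  aux r w := (P.upd μ.ins μ.sym r).eval st.interp c (Fin.append μ.tup w)

/-- `π` is an isomorphism between the substructures induced by `A` and `B` in the
states `S` and `T` (both input and auxiliary relations are preserved, and the
constants lie in `A` and correspond under `π`). -/
def IsoOn {X Y Rin Raux : Type} {arin : Rin → ℕ} {araux : Raux → ℕ} {p : ℕ}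
    (π : X → Y) (A : Set X) (B : Set Y) (cS : Fin p → X) (cT : Fin p → Y)
    (S : DState X Rin Raux arin araux) (T : DState Y Rin Raux arin araux) : Prop :=
  Set.BijOn π A B ∧ (∀ i, cS i ∈ A) ∧ (∀ i, cT i = π (cS i)) ∧
  (∀ s (v : Fin (arin s) → X), (∀ i, v i ∈ A) → (S.inp s v ↔ T.inp s (π ∘ v))) ∧
  (∀ r (w : Fin (araux r) → X), (∀ i, w i ∈ A) → (S.aux r w ↔ T.aux r (π ∘ w)))


lemma comp_append' {X Y : Type} {m n : ℕ} (π : X → Y) (u : Fin m → X) (v : Fin n → X) :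
    π ∘ Fin.append u v = Fin.append (π ∘ u) (π ∘ v) := by
  funext i
  refine Fin.addCases (fun l => ?_) (fun r => ?_) i <;> simp [Fin.append_left, Fin.append_right]

lemma eval_iff {X Y Rin Raux : Type} {arin : Rin → ℕ} {araux : Raux → ℕ} {p k : ℕ}
    (π : X → Y) (A : Set X) (B : Set Y) (cS : Fin p → X) (cT : Fin p → Y)
    (S : DState X Rin Raux arin araux) (T : DState Y Rin Raux arin araux)
    (hiso : IsoOn π A B cS cT S T)
    (a : Fin k → X) (ha : ∀ i, a i ∈ A)
    (φ : QF (Rin ⊕ Raux) (Sum.elim arin araux) k p) :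
    φ.eval S.interp cS a ↔ φ.eval T.interp cT (π ∘ a) := by
  obtain ⟨hbij, hcA, hcπ, hinp, haux⟩ := hiso
  have hmem : ∀ i : Fin k ⊕ Fin p, Sum.elim a cS i ∈ A := by
    rintro (i|i) <;> simp [ha, hcA]
  have hval : ∀ i : Fin k ⊕ Fin p, Sum.elim (π ∘ a) cT i = π (Sum.elim a cS i) := by
    rintro (i|i) <;> simp [hcπ]
  induction φ with
  | rel r ι =>
    have hv : ∀ i, (fun i => Sum.elim a cS (ι i)) i ∈ A := fun i => hmem (ι i)
    have hc : (fun i => Sum.elim (π ∘ a) cT (ι i)) = π ∘ (fun i => Sum.elim a cS (ι i)) := by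
      funext i; exact hval (ι i)
    cases r with
    | inl s => rw [show (QF.rel (Sum.inl s) ι : QF _ _ k p).eval S.interp cS a ↔ _ from Iff.rfl]; show _ ↔ T.inp s _; rw [hc]; exact hinp s _ hv
    | inr r => show _ ↔ T.aux r _; rw [hc]; exact haux r _ hv
  | eq i j =>
    simp only [QF.eval, hval]
    exact ⟨fun h => by rw [h], fun h => hbij.injOn (hmem i) (hmem j) h⟩
  | not φ ih => simp [QF.eval, ih]
  | and φ ψ ih1 ih2 => simp [QF.eval, ih1, ih2]
  | or φ ψ ih1 ih2 => simp [QF.eval, ih1, ih2]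

lemma step_iso {X Y Rin Raux : Type} {arin : Rin → ℕ} {araux : Raux → ℕ} {p : ℕ}
    (P : DynProg Rin Raux arin araux p)
    (π : X → Y) (A : Set X) (B : Set Y) (cS : Fin p → X) (cT : Fin p → Y)
    (S : DState X Rin Raux arin araux) (T : DState Y Rin Raux arin araux)
    (hiso : IsoOn π A B cS cT S T)
    (μ : DynMod X Rin arin) (hμ : ∀ i, μ.tup i ∈ A) :
    IsoOn π A B cS cT (applyMod P cS S μ) (applyMod P cT T (μ.map π)) := by
  obtain ⟨hbij, hcA, hcπ, hinp, haux⟩ := hiso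
  have hiso' : IsoOn π A B cS cT S T := ⟨hbij, hcA, hcπ, hinp, haux⟩
  refine ⟨hbij, hcA, hcπ, ?_, ?_⟩
  · intro s v hv
    have key : (s = μ.sym ∧ HEq v μ.tup) ↔ (s = μ.sym ∧ HEq (π ∘ v) (π ∘ μ.tup)) := by
      constructor
      · rintro ⟨rfl, h⟩; exact ⟨rfl, heq_of_eq (by rw [eq_of_heq h])⟩
      · rintro ⟨rfl, h⟩
        refine ⟨rfl, heq_of_eq (funext fun i => ?_)⟩
        exact hbij.injOn (hv i) (hμ i) (congrFun (eq_of_heq h) i)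
    simp only [applyMod, DynMod.map]
    rcases Bool.eq_false_or_eq_true μ.ins with hb | hb
    · simp only [hb, ↓reduceIte]; rw [hinp s v hv, key]
    · simp only [hb, ↓reduceIte, Bool.false_eq_true]; rw [hinp s v hv, key]
  · intro r w hw
    simp only [applyMod, DynMod.map]
    have happ : ∀ i, Fin.append μ.tup w i ∈ A := by
      intro i
      refine Fin.addCases (fun l => ?_) (fun rr => ?_) i <;>
        simp [Fin.append_left, Fin.append_right, hμ, hw]
    have := eval_iff π A B cS cT S T hiso' (Fin.append μ.tup w) happ
      (P.upd μ.ins μ.sym r)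
    rw [this, comp_append']

/-- **Substructure lemma for quantifier-free dynamic programs.** If the substructures
of two states induced by `A` and `B` are isomorphic via `π`, then after applying any
two `π`-respecting modification sequences on `A` and `B`, the resulting induced
substructures are again isomorphic via `π`. -/
theorem substructure_lemma
    (X Y Rin Raux : Type) (arin : Rin → ℕ) (araux : Raux → ℕ) (p : ℕ)
    (P : DynProg Rin Raux arin araux p)
    (cS : Fin p → X) (cT : Fin p → Y)
    (S : DState X Rin Raux arin araux) (T : DState Y Rin Raux arin araux)
    (A : Set X) (B : Set Y) (π : X → Y)
    (hiso : IsoOn π A B cS cT S T)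
    (α : List (DynMod X Rin arin)) (hα : ∀ μ ∈ α, ∀ i, μ.tup i ∈ A) :
    IsoOn π A B cS cT
      (α.foldl (applyMod P cS) S)
      ((α.map (DynMod.map π)).foldl (applyMod P cT) T) := by
  
  induction α generalizing S T with
  | nil => simpa using hiso
  | cons μ α ih =>
    simp only [List.map_cons, List.foldl_cons]
    exact ih _ _ (step_iso P π A B cS cT S T hiso μ (hα μ (by simp)))
      (fun ν hν i => hα ν (by simp [hν]) i)
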